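/- Assume c_f := min_j ‖f‖_{H^{-1}(Ω_j)} > 0. Let V_n ⊂ H^1_0(Ω) be a finite-dimensional subspace and suppose there exists a proper subset S ⊊ {1,…,d} such that V_n ∩ V_S = {0}. Then for every constant C ∈ (0,1) there exists y ∈ [1,∞)^d such that the Galerkin projection satisfies ‖u(y) − P^y_{V_n} u(y)‖_{H^1_0} ≥ C ‖u(y)‖_{H^1_0}, where P^y_{V_n} is the orthogonal projector onto V_n for the energy norm ‖·‖_y. -/

import Mathlib

open scoped BigOperators ENNReal InnerProductSpace
open Filter

noncomputable section

variable {V : Type*} [NormedAddCommGroup V] [InnerProductSpace ℝ V] [CompleteSpace V]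

/-- The closed subspace `V_S` of functions whose gradient vanishes on `Ω_j` for all `j ∈ S`,
encoded through the local Dirichlet forms `B j v w = ∫_{Ω_j} ∇v·∇w`. -/
def VS {d : ℕ} (B : Fin d → V →L[ℝ] V →L[ℝ] ℝ) (S : Set (Fin d)) : Submodule ℝ V where
  carrier := {v | ∀ j ∈ S, B j v = 0}
  add_mem' := by
    intro a b ha hb j hj
    simp only [Set.mem_setOf_eq] at *
    simp [map_add, ha j hj, hb j hj]
  zero_mem' := by intro j hj; simp
  smul_mem' := by
    intro c a ha j hj
    simp only [Set.mem_setOf_eq] at *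
    simp [map_smul, ha j hj]

/-- The parametric energy bilinear form `a_y(v,w) = Σ_j y_j ∫_{Ω_j} ∇v·∇w`. -/
def aForm {d : ℕ} (B : Fin d → V →L[ℝ] V →L[ℝ] ℝ) (y : Fin d → ℝ) (v w : V) : ℝ :=
  ∑ j, y j * B j v w

/-- The parametric energy norm `‖v‖_y`. -/
def eNorm {d : ℕ} (B : Fin d → V →L[ℝ] V →L[ℝ] ℝ) (y : Fin d → ℝ) (v : V) : ℝ :=
  Real.sqrt (aForm B y v v)

/-- `u` is the weak solution of the diffusion problem with (finite) parameter `y`. -/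
def IsWeakSol {d : ℕ} (B : Fin d → V →L[ℝ] V →L[ℝ] ℝ) (f : V →L[ℝ] ℝ)
    (y : Fin d → ℝ) (u : V) : Prop :=
  ∀ v : V, aForm B y u v = f v

/-- `u` is the (possibly stiff-limit) solution for an extended parameter `y ∈ (0,∞]^d`:
on the set `S = {j | y j = ∞}` of infinite entries, `u ∈ V_S` and `u` solves the
limit variational problem over `V_S`. -/
def IsSolE {d : ℕ} (B : Fin d → V →L[ℝ] V →L[ℝ] ℝ) (f : V →L[ℝ] ℝ)
    (y : Fin d → ℝ≥0∞) (u : V) : Prop :=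
  u ∈ VS B {j | y j = ∞} ∧
  ∀ v ∈ VS B {j | y j = ∞}, ∑ j, (y j).toReal * B j u v = f v

/-- `p` is the `H^1_0`-orthogonal projection of `u` onto `K`. -/
def IsOrthProj (K : Submodule ℝ V) (u p : V) : Prop :=
  p ∈ K ∧ ∀ w ∈ K, ⟪u - p, w⟫_ℝ = 0

/-- `p` is the Galerkin projection of `u` onto `K` for the energy inner product `⟨·,·⟩_y`. -/
def IsGalProj {d : ℕ} (B : Fin d → V →L[ℝ] V →L[ℝ] ℝ) (y : Fin d → ℝ)
    (K : Submodule ℝ V) (u p : V) : Prop :=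
  p ∈ K ∧ ∀ w ∈ K, aForm B y (u - p) w = 0

/-- Galerkin projection for an extended parameter `y ∈ (0,∞]^d` (the energy inner
product being restricted to the finite components of `y`). -/
def IsGalProjE {d : ℕ} (B : Fin d → V →L[ℝ] V →L[ℝ] ℝ) (y : Fin d → ℝ≥0∞)
    (K : Submodule ℝ V) (u p : V) : Prop :=
  p ∈ K ∧ ∀ w ∈ K, ∑ j, (y j).toReal * B j (u - p) w = 0

/-- The finite set of multi-indices `ν ∈ ℕ^d` of total degree `|ν| ≤ k`. -/
def mIdx (d k : ℕ) : Finset (Fin d → ℕ) :=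
  (Fintype.piFinset fun _ : Fin d => Finset.range (k+1)).filter fun ν => ∑ j, ν j ≤ k

/-- The monomial `y^ν`. -/
def mono {d : ℕ} (y : Fin d → ℝ) (ν : Fin d → ℕ) : ℝ := ∏ j, y j ^ ν j

lemma psd_sq_le (b : V →L[ℝ] V →L[ℝ] ℝ) (hs : ∀ v w, b v w = b w v)
    (hn : ∀ v, 0 ≤ b v v) (v w : V) : (b v w)^2 ≤ b v v * b w w := by
  have key : ∀ s : ℝ, 0 ≤ b w w * (s * s) + (2 * b v w) * s + b v v := by
    intro s
    have h0 := hn (v + s • w)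
    have he : b (v + s • w) (v + s • w)
        = b w w * (s * s) + (2 * b v w) * s + b v v := by
      simp only [map_add, map_smul, ContinuousLinearMap.add_apply,
        ContinuousLinearMap.smul_apply, smul_eq_mul, ContinuousLinearMap.map_smul]
      rw [hs w v]; ring
    linarith [he ▸ h0]
  have hd := discrim_le_zero (a := b w w) (b := 2 * b v w) (c := b v v) key
  simp only [discrim] at hd
  nlinarith

lemma psd_eq_zero (b : V →L[ℝ] V →L[ℝ] ℝ) (hs : ∀ v w, b v w = b w v)
    (hn : ∀ v, 0 ≤ b v v) {v : V} (hv : b v v = 0) : b v = 0 := by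
  ext w
  have h := psd_sq_le b hs hn v w
  rw [hv] at h
  have : (b v w)^2 = 0 := le_antisymm (by linarith) (sq_nonneg _)
  simpa [pow_eq_zero_iff] using this

lemma exists_eps {d : ℕ} (B : Fin d → V →L[ℝ] V →L[ℝ] ℝ)
    (hsymm : ∀ (j : Fin d) (v w : V), B j v w = B j w v)
    (hnonneg : ∀ (j : Fin d) (v : V), 0 ≤ B j v v)
    (Vn : Submodule ℝ V) (hfin : FiniteDimensional ℝ Vn)
    (S : Set (Fin d)) [DecidablePred (· ∈ S)]
    (hdisj : Vn ⊓ VS B S = ⊥) (hne : Vn ≠ ⊥) :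
    ∃ ε > (0:ℝ), ∀ v ∈ Vn, ε * ‖v‖^2 ≤ ∑ j ∈ Finset.univ.filter (· ∈ S), B j v v := by
  classical
  set Q : V → ℝ := fun v => ∑ j ∈ Finset.univ.filter (· ∈ S), B j v v with hQ
  have hQnonneg : ∀ v, 0 ≤ Q v := fun v =>
    Finset.sum_nonneg fun j _ => hnonneg j v
  have hQpos : ∀ v ∈ Vn, v ≠ 0 → 0 < Q v := by
    intro v hv hv0
    rcases (hQnonneg v).lt_or_eq with h | h
    · exact h
    · exfalso
      have hz : ∀ j ∈ Finset.univ.filter (· ∈ S), B j v v = 0 :=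
        (Finset.sum_eq_zero_iff_of_nonneg fun j _ => hnonneg j v).1 h.symm
      have hVS : v ∈ VS B S := by
        intro j hj
        exact psd_eq_zero (B j) (hsymm j) (hnonneg j) (hz j (by simp [hj]))
      have : v ∈ Vn ⊓ VS B S := ⟨hv, hVS⟩
      rw [hdisj] at this
      exact hv0 this
  haveI := hfin
  obtain ⟨x, hxVn, hx0⟩ := Submodule.exists_mem_ne_zero_of_ne_bot hne
  have hxn : (0:ℝ) < ‖x‖ := norm_pos_iff.2 hx0
  set xu : Vn := ‖x‖⁻¹ • ⟨x, hxVn⟩ with hxu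
  have hxus : xu ∈ Metric.sphere (0 : Vn) 1 := by
    simp only [Metric.mem_sphere, dist_zero_right, hxu, norm_smul]
    rw [norm_inv, Real.norm_eq_abs, abs_of_pos hxn]
    have : ‖(⟨x, hxVn⟩ : Vn)‖ = ‖x‖ := rfl
    rw [this, inv_mul_cancel₀ hxn.ne']
  have hg : Continuous fun v : Vn => Q (v : V) := by
    apply continuous_finset_sum
    intro j _
    have h2 : Continuous fun p : V × V => B j p.1 p.2 := (B j).continuous₂
    exact h2.comp ((continuous_subtype_val).prodMk continuous_subtype_val)
  obtain ⟨v₀, hv₀s, hv₀min⟩ :=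
    (isCompact_sphere (0 : Vn) 1).exists_isMinOn ⟨xu, hxus⟩ hg.continuousOn
  have hv₀n : ‖v₀‖ = 1 := by simpa [dist_zero_right] using hv₀s
  have hv₀ne : (v₀ : V) ≠ 0 := by
    intro h
    have : v₀ = 0 := Subtype.ext h
    rw [this] at hv₀n; simp at hv₀n
  refine ⟨Q (v₀ : V), hQpos _ v₀.2 hv₀ne, ?_⟩
  intro v hv
  by_cases hv0 : v = 0
  · simp [hv0, hQ]
  · have hvn : (0:ℝ) < ‖v‖ := norm_pos_iff.2 hv0
    set w : Vn := ‖v‖⁻¹ • ⟨v, hv⟩ with hw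
    have hws : w ∈ Metric.sphere (0 : Vn) 1 := by
      simp only [Metric.mem_sphere, dist_zero_right, hw, norm_smul]
      rw [norm_inv, Real.norm_eq_abs, abs_of_pos hvn]
      have : ‖(⟨v, hv⟩ : Vn)‖ = ‖v‖ := rfl
      rw [this, inv_mul_cancel₀ hvn.ne']
    have hle := hv₀min hws
    have hQw : Q (w : V) = (‖v‖^2)⁻¹ * Q v := by
      have hwc : (w : V) = ‖v‖⁻¹ • v := rfl
      rw [hwc, hQ]
      simp only [map_smul, ContinuousLinearMap.smul_apply, smul_eq_mul]
      rw [Finset.mul_sum, ← Finset.sum_congr rfl]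
      intro j _
      rw [sq, mul_inv]
      ring
    have h2 : Q (v₀ : V) ≤ (‖v‖^2)⁻¹ * Q v := by
      rw [← hQw]; exact hle
    rw [inv_mul_eq_div, le_div_iff₀ (by positivity)] at h2
    linarith

set_option maxHeartbeats 1000000 in
set_option synthInstance.maxHeartbeats 400000 in
theorem statement11
    {V : Type*} [NormedAddCommGroup V] [InnerProductSpace ℝ V] [CompleteSpace V]
    {d : ℕ}
    (hd : 0 < d)
    (B : Fin d → V →L[ℝ] V →L[ℝ] ℝ)
    (hsymm : ∀ (j : Fin d) (v w : V), B j v w = B j w v)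
    (hnonneg : ∀ (j : Fin d) (v : V), 0 ≤ B j v v)
    (hsum : ∀ v w : V, ∑ j, B j v w = ⟪v, w⟫_ℝ)
    (f : V →L[ℝ] ℝ)
    (Wloc : Fin d → Submodule ℝ V)
    (hWloc : ∀ j : Fin d, ∀ v ∈ Wloc j, ∀ i : Fin d, i ≠ j → B i v = 0)
    (hcf : 0 < ⨅ j : Fin d, ‖f.comp (Wloc j).subtypeL‖)
    (Vn : Submodule ℝ V) (hfin : FiniteDimensional ℝ Vn)
    (S : Set (Fin d)) (hS : S ≠ Set.univ) (hdisj : Vn ⊓ VS B S = ⊥)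
    (Cc : ℝ) (hCc : Cc ∈ Set.Ioo (0 : ℝ) 1) :
    ∃ y : Fin d → ℝ, (∀ j, 1 ≤ y j) ∧
      ∀ u : V, IsWeakSol B f y u → ∀ p : V, IsGalProj B y Vn u p →
        Cc * ‖u‖ ≤ ‖u - p‖ := by
  classical
  haveI : Nonempty (Fin d) := ⟨⟨0, hd⟩⟩
  obtain ⟨hC0, hC1⟩ := hCc
  obtain ⟨j₀, hj₀⟩ := (Set.ne_univ_iff_exists_notMem S).1 hS
  set c := ⨅ j : Fin d, ‖f.comp (Wloc j).subtypeL‖ with hc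
  have hcj : c ≤ ‖f.comp (Wloc j₀).subtypeL‖ :=
    ciInf_le (Set.Finite.bddBelow (Set.finite_range _)) j₀
  have hcF : c ≤ ‖f‖ := by
    refine hcj.trans (ContinuousLinearMap.opNorm_le_bound _ (norm_nonneg f) ?_)
    intro w
    exact f.le_opNorm (w : V)
  have hF : (0:ℝ) < ‖f‖ := lt_of_lt_of_le hcf hcF
  by_cases hVn : Vn = ⊥
  · refine ⟨fun _ => 1, fun j => le_refl 1, ?_⟩
    intro u hu p hp
    have hp0 : p = 0 := by
      have := hp.1; rw [hVn] at this; simpa using this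
    rw [hp0, sub_zero]
    nlinarith [norm_nonneg u]
  · obtain ⟨ε, hε, hQlow⟩ := exists_eps B hsymm hnonneg Vn hfin S hdisj hVn
    set δ := (1 - Cc) * c with hδdef
    have hδ : (0:ℝ) < δ := mul_pos (by linarith) hcf
    set t := 1 + ‖f‖^2 / (ε * δ^2) with ht
    have ht1 : (1:ℝ) ≤ t := le_add_of_nonneg_right (by positivity)
    have ht0 : (0:ℝ) ≤ t - 1 := by linarith
    set y := fun j => if j ∈ S then t else 1 with hy
    refine ⟨y, fun j => by by_cases h : j ∈ S <;> simp [hy, h, ht1], ?_⟩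
    intro u hu p hp
    -- the energy form identity
    have haf : ∀ v w : V, aForm B y v w
        = ⟪v, w⟫_ℝ + (t - 1) * ∑ j ∈ Finset.univ.filter (· ∈ S), B j v w := by
      intro v w
      rw [← hsum v w, aForm, Finset.mul_sum, Finset.sum_filter,
        ← Finset.sum_add_distrib]
      apply Finset.sum_congr rfl
      intro j _
      by_cases h : j ∈ S <;> simp [hy, h] <;> ring
    -- lower bound on the solution: c ≤ ‖u‖
    have hcu : c ≤ ‖u‖ := by
      refine hcj.trans (ContinuousLinearMap.opNorm_le_bound _ (norm_nonneg u) ?_)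
      intro w
      have hfw : f (w : V) = B j₀ u (w : V) := by
        rw [← hu (w : V), aForm, Finset.sum_eq_single j₀]
        · simp [hy, hj₀]
        · intro j _ hj
          have hz : B j (w : V) = 0 := hWloc j₀ (w : V) w.2 j hj
          rw [hsymm j u (w : V), hz]; simp
        · intro h; exact absurd (Finset.mem_univ _) h
      have hBuu : B j₀ u u ≤ ‖u‖^2 := by
        have h1 := Finset.single_le_sum (f := fun j => B j u u)
          (fun j _ => hnonneg j u) (Finset.mem_univ j₀)
        rw [hsum u u, real_inner_self_eq_norm_sq] at h1
        exact h1
      have hBww : B j₀ (w : V) (w : V) ≤ ‖(w : V)‖^2 := by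
        have h1 := Finset.single_le_sum (f := fun j => B j (w:V) (w:V))
          (fun j _ => hnonneg j (w:V)) (Finset.mem_univ j₀)
        rw [hsum (w:V) (w:V), real_inner_self_eq_norm_sq] at h1
        exact h1
      have hcs := psd_sq_le (B j₀) (hsymm j₀) (hnonneg j₀) u (w : V)
      have hprod : B j₀ u u * B j₀ (w:V) (w:V) ≤ ‖u‖^2 * ‖(w:V)‖^2 :=
        mul_le_mul hBuu hBww (hnonneg j₀ (w:V)) (sq_nonneg _)
      have habs : |B j₀ u (w : V)| ≤ ‖u‖ * ‖(w : V)‖ := by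
        nlinarith [abs_nonneg (B j₀ u (w:V)), sq_abs (B j₀ u (w:V)),
          mul_nonneg (norm_nonneg u) (norm_nonneg (w:V))]
      have : ‖(f.comp (Wloc j₀).subtypeL) w‖ = |B j₀ u (w : V)| := by
        simp only [ContinuousLinearMap.comp_apply, Submodule.subtypeL_apply,
          Real.norm_eq_abs, hfw]
      rw [this]
      exact habs.trans_eq (by rfl)
    -- energy identity for p
    have hsub : ∀ w : V, aForm B y (u - p) w = aForm B y u w - aForm B y p w := by
      intro w
      simp [aForm, map_sub, ContinuousLinearMap.sub_apply, mul_sub,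
        Finset.sum_sub_distrib]
    have hgal : aForm B y p p = f p := by
      have h1 := hp.2 p hp.1
      rw [hsub p] at h1
      have h2 := hu p
      linarith
    have hQp : 0 ≤ ∑ j ∈ Finset.univ.filter (· ∈ S), B j p p :=
      Finset.sum_nonneg fun j _ => hnonneg j p
    have hfp : f p ≤ ‖f‖ * ‖p‖ := by
      have := f.le_opNorm p
      calc f p ≤ |f p| := le_abs_self _
      _ = ‖f p‖ := (Real.norm_eq_abs _).symm
      _ ≤ ‖f‖ * ‖p‖ := f.le_opNorm p
    have hpid : ‖p‖^2 + (t-1) * ∑ j ∈ Finset.univ.filter (· ∈ S), B j p p = f p := by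
      rw [← hgal, haf p p, real_inner_self_eq_norm_sq]
    have hpF : ‖p‖ ≤ ‖f‖ := by
      nlinarith [norm_nonneg p, mul_nonneg ht0 hQp, sq_nonneg (‖p‖ - ‖f‖)]
    -- smallness of p
    have hεp : ε * ‖p‖^2 ≤ ∑ j ∈ Finset.univ.filter (· ∈ S), B j p p := hQlow p hp.1
    have hchain : (t-1) * (ε * ‖p‖^2) ≤ ‖f‖^2 := by
      have h1 : (t-1) * (ε * ‖p‖^2) ≤ (t-1) * ∑ j ∈ Finset.univ.filter (· ∈ S), B j p p :=
        mul_le_mul_of_nonneg_left hεp ht0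
      have h2 : (t-1) * ∑ j ∈ Finset.univ.filter (· ∈ S), B j p p ≤ ‖f‖ * ‖p‖ := by
        nlinarith [norm_nonneg p]
      have h3 : ‖f‖ * ‖p‖ ≤ ‖f‖^2 := by nlinarith
      linarith
    have hteq : (t-1) * (ε * δ^2) = ‖f‖^2 := by
      rw [ht]
      field_simp
      ring
    have htpos : (0:ℝ) < (t-1) * ε := by
      rw [ht]
      have : (0:ℝ) < ‖f‖^2 / (ε * δ^2) := by positivity
      simp only [add_sub_cancel_left]
      positivity
    have hpδ2 : ‖p‖^2 ≤ δ^2 := by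
      have h1 : (t-1) * ε * ‖p‖^2 ≤ (t-1) * ε * δ^2 := by
        calc (t-1) * ε * ‖p‖^2 = (t-1) * (ε * ‖p‖^2) := by ring
        _ ≤ ‖f‖^2 := hchain
        _ = (t-1) * (ε * δ^2) := hteq.symm
        _ = (t-1) * ε * δ^2 := by ring
      exact le_of_mul_le_mul_left (by linarith) htpos
    have hpδ : ‖p‖ ≤ δ := by
      nlinarith [norm_nonneg p, hδ]
    -- conclusion
    have htri : ‖u‖ - ‖p‖ ≤ ‖u - p‖ := norm_sub_norm_le u p
    have hδu : δ ≤ (1 - Cc) * ‖u‖ := by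
      rw [hδdef]
      exact mul_le_mul_of_nonneg_left hcu (by linarith)
    linarith

end
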